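/- For t, k > 0 and 0 < α < 1, there exists a nonnegative Borel measure γ_t on [0,∞) such that exp(-t k^α) = ∫_0^∞ exp(-λ k) dγ_t(λ); in the case α = 1/2 one can take dγ_t(λ) = (t / (2√π)) λ^(-3/2) exp(-t²/(4λ)) dλ, i.e. exp(-t √k) = ∫_0^∞ (t / (2√π)) λ^(-3/2) exp(-t²/(4λ)) exp(-λ k) dλ. -/

import Mathlib

open Real MeasureTheory Set

lemma rpow_neg_three_half {x : ℝ} (hx : 0 < x) :
    x ^ (-(3 : ℝ) / 2) = 1 / (x * Real.sqrt x) := by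
  rw [show (-(3 : ℝ) / 2) = -(3 / 2) by norm_num, Real.rpow_neg hx.le,
    show (3 : ℝ) / 2 = 1 + 1 / 2 by norm_num, Real.rpow_add hx, Real.rpow_one,
    ← Real.sqrt_eq_rpow, one_div]

lemma glasser (b : ℝ) (hb : 0 < b) :
    ∫ x in Ioi (0 : ℝ), Real.exp (-x ^ 2 - b ^ 2 / x ^ 2)
      = Real.sqrt Real.pi / 2 * Real.exp (-(2 * b)) := by
  set g : ℝ → ℝ := fun x => Real.exp (-x ^ 2 - b ^ 2 / x ^ 2) with hgdef
  -- substitution x ↦ b / x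
  have himg1 : (fun x : ℝ => b / x) '' Ioi 0 = Ioi 0 := by
    ext y
    constructor
    · rintro ⟨x, hx, rfl⟩
      exact div_pos hb hx
    · intro hy
      exact ⟨b / y, div_pos hb hy, by field_simp⟩
  have hderiv1 : ∀ x ∈ Ioi (0 : ℝ),
      HasDerivWithinAt (fun x : ℝ => b / x) (-(b / x ^ 2)) (Ioi 0) x := by
    intro x hx
    have h := (hasDerivAt_inv (ne_of_gt (mem_Ioi.mp hx))).const_mul b
    have h2 : HasDerivAt (fun x : ℝ => b / x) (-(b / x ^ 2)) x := by
      simpa [div_eq_mul_inv] using h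
    exact h2.hasDerivWithinAt
  have hinj1 : InjOn (fun x : ℝ => b / x) (Ioi 0) := by
    intro x hx y hy h
    have hx0 : x ≠ 0 := ne_of_gt hx
    have hy0 : y ≠ 0 := ne_of_gt hy
    rw [div_eq_div_iff (ne_of_gt hx) (ne_of_gt hy)] at h
    exact (mul_left_cancel₀ (ne_of_gt hb) h).symm
  have hgval : ∀ x ∈ Ioi (0 : ℝ), g (b / x) = g x := by
    intro x hx
    have hx0 : x ≠ 0 := ne_of_gt (mem_Ioi.mp hx)
    simp only [hgdef]
    congr 1
    field_simp
    ring
  -- integrability of g on Ioi 0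
  have hgmeas : Measurable g := by
    apply Real.measurable_exp.comp
    exact ((measurable_id.pow_const 2).neg.sub
      ((measurable_const).div (measurable_id.pow_const 2)))
  have hint : IntegrableOn g (Ioi 0) := by
    apply Integrable.mono' ((integrable_exp_neg_mul_sq one_pos).integrableOn)
      hgmeas.aestronglyMeasurable
    filter_upwards with x
    rw [Real.norm_eq_abs, abs_of_pos (Real.exp_pos _)]
    apply Real.exp_le_exp.mpr
    have : 0 ≤ b ^ 2 / x ^ 2 := div_nonneg (sq_nonneg b) (sq_nonneg x)
    nlinarith
  have hint2 : IntegrableOn (fun x : ℝ => (b / x ^ 2) * g x) (Ioi 0) := by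
    have := (integrableOn_image_iff_integrableOn_abs_deriv_smul measurableSet_Ioi
      hderiv1 hinj1 g).mp (by rwa [himg1])
    apply this.congr_fun _ measurableSet_Ioi
    intro x hx
    have hx0 : (0 : ℝ) < x := mem_Ioi.mp hx
    simp only [smul_eq_mul, abs_neg]
    rw [abs_of_pos (div_pos hb (pow_pos hx0 2)), hgval x hx]
  -- key1 : I = ∫ (b/x²) g x
  have key1 : ∫ x in Ioi (0 : ℝ), g x = ∫ x in Ioi (0 : ℝ), (b / x ^ 2) * g x := by
    conv_lhs => rw [← himg1]
    rw [integral_image_eq_integral_abs_deriv_smul measurableSet_Ioi hderiv1 hinj1 g]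
    refine setIntegral_congr_fun measurableSet_Ioi fun x hx => ?_
    have hx0 : (0 : ℝ) < x := mem_Ioi.mp hx
    rw [abs_neg, abs_of_pos (div_pos hb (pow_pos hx0 2)), smul_eq_mul, hgval x hx]
  -- sum
  have hsum : (2 : ℝ) * ∫ x in Ioi (0 : ℝ), g x
      = ∫ x in Ioi (0 : ℝ), (1 + b / x ^ 2) * g x := by
    rw [two_mul]
    nth_rewrite 2 [key1]
    rw [← integral_add hint hint2]
    refine setIntegral_congr_fun measurableSet_Ioi fun x _ => by ring
  -- second substitution x ↦ x - b / x
  have hderiv2 : ∀ x ∈ Ioi (0 : ℝ),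
      HasDerivWithinAt (fun x : ℝ => x - b / x) (1 + b / x ^ 2) (Ioi 0) x := by
    intro x hx
    have h := (hasDerivAt_id x).sub ((hasDerivAt_inv (ne_of_gt (mem_Ioi.mp hx))).const_mul b)
    have h2 : HasDerivAt (fun x : ℝ => x - b / x) (1 + b / x ^ 2) x := by
      simpa [div_eq_mul_inv, sub_neg_eq_add, Pi.sub_def] using h
    exact h2.hasDerivWithinAt
  have hmono : StrictMonoOn (fun x : ℝ => x - b / x) (Ioi 0) := by
    intro x hx y hy hxy
    have h1 : b / y < b / x := div_lt_div_of_pos_left hb (mem_Ioi.mp hx) hxy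
    simp only
    linarith
  have hinj2 : InjOn (fun x : ℝ => x - b / x) (Ioi 0) := hmono.injOn
  have himg2 : (fun x : ℝ => x - b / x) '' Ioi 0 = univ := by
    apply eq_univ_of_forall
    intro u
    set s := Real.sqrt (u ^ 2 + 4 * b) with hs
    have hs2 : s ^ 2 = u ^ 2 + 4 * b := Real.sq_sqrt (by nlinarith [sq_nonneg u])
    have habs : |u| < s := by
      rw [hs, ← Real.sqrt_sq_eq_abs]
      exact Real.sqrt_lt_sqrt (sq_nonneg u) (by linarith)
    have hu : -u ≤ |u| := neg_le_abs u
    have hxpos : (0 : ℝ) < (u + s) / 2 := by linarith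
    refine ⟨(u + s) / 2, mem_Ioi.mpr hxpos, ?_⟩
    have hus : (0 : ℝ) < u + s := by linarith
    show (u + s) / 2 - b / ((u + s) / 2) = u
    field_simp
    nlinarith [hs2]
  have key2 : ∫ x in Ioi (0 : ℝ), (1 + b / x ^ 2) * Real.exp (-(x - b / x) ^ 2)
      = Real.sqrt Real.pi := by
    have h := integral_image_eq_integral_abs_deriv_smul measurableSet_Ioi hderiv2 hinj2
      (fun u => Real.exp (-u ^ 2))
    rw [himg2, Measure.restrict_univ] at h
    have hgauss : ∫ u : ℝ, Real.exp (-u ^ 2) = Real.sqrt Real.pi := by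
      have := integral_gaussian 1
      simpa using this
    rw [← hgauss, h]
    refine setIntegral_congr_fun measurableSet_Ioi fun x hx => ?_
    have hx0 : (0 : ℝ) < x := mem_Ioi.mp hx
    have hpos : (0 : ℝ) < 1 + b / x ^ 2 := by positivity
    rw [abs_of_pos hpos, smul_eq_mul]
  -- combine
  have hcomb : ∫ x in Ioi (0 : ℝ), (1 + b / x ^ 2) * g x
      = Real.sqrt Real.pi * Real.exp (-(2 * b)) := by
    have heq : ∀ x ∈ Ioi (0 : ℝ), (1 + b / x ^ 2) * g x
        = ((1 + b / x ^ 2) * Real.exp (-(x - b / x) ^ 2)) * Real.exp (-(2 * b)) := by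
      intro x hx
      have hx0 : x ≠ 0 := ne_of_gt (mem_Ioi.mp hx)
      simp only [hgdef]
      rw [mul_assoc, ← Real.exp_add]
      congr 2
      field_simp
      ring
    rw [setIntegral_congr_fun measurableSet_Ioi heq, integral_mul_const, key2]
  linarith [hsum, hcomb]

/-- Bochner's subordination formula for `α = 1/2`:
`exp(-t √k) = ∫_0^∞ (t/(2√π)) λ^{-3/2} exp(-t²/(4λ)) exp(-λ k) dλ` for `t, k > 0`. -/
theorem subordination_formula_half
    (t k : ℝ) (ht : 0 < t) (hk : 0 < k) :
    Real.exp (-t * Real.sqrt k)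
      = ∫ l in Set.Ioi (0 : ℝ),
          (t / (2 * Real.sqrt Real.pi)) * l ^ (-(3 : ℝ) / 2) *
            Real.exp (-t ^ 2 / (4 * l)) * Real.exp (-l * k) := by
  set F : ℝ → ℝ := fun l => (t / (2 * Real.sqrt Real.pi)) * l ^ (-(3 : ℝ) / 2) *
      Real.exp (-t ^ 2 / (4 * l)) * Real.exp (-l * k) with hF
  set c : ℝ := t ^ 2 / 4 with hc
  have hcpos : 0 < c := by positivity
  -- substitution l = c / y^2
  have hderiv : ∀ y ∈ Ioi (0 : ℝ),
      HasDerivWithinAt (fun y : ℝ => c / y ^ 2) (-(2 * c / y ^ 3)) (Ioi 0) y := by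
    intro y hy
    have hy0 : (0 : ℝ) < y := mem_Ioi.mp hy
    have h1 : HasDerivAt (fun y : ℝ => y ^ 2) (2 * y) y := by
      simpa using hasDerivAt_pow 2 y
    have h2 := (h1.inv (by positivity)).const_mul c
    have hy' : y ≠ 0 := ne_of_gt hy0
    have heq : c * (-(2 * y) / (y ^ 2) ^ 2) = -(2 * c / y ^ 3) := by
      field_simp
    rw [heq] at h2
    have hfun : (fun y : ℝ => c / y ^ 2) = fun y : ℝ => c * (y ^ 2)⁻¹ := by
      funext z; rw [div_eq_mul_inv]
    rw [hfun]
    exact h2.hasDerivWithinAt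
  have hinj : InjOn (fun y : ℝ => c / y ^ 2) (Ioi 0) := by
    intro x hx y hy h
    have hx0 : (0 : ℝ) < x := mem_Ioi.mp hx
    have hy0 : (0 : ℝ) < y := mem_Ioi.mp hy
    simp only at h
    rw [div_eq_div_iff (by positivity) (by positivity)] at h
    have h2 : x ^ 2 = y ^ 2 := mul_left_cancel₀ (ne_of_gt hcpos) h.symm
    nlinarith
  have himg : (fun y : ℝ => c / y ^ 2) '' Ioi 0 = Ioi 0 := by
    ext l
    constructor
    · rintro ⟨y, hy, rfl⟩
      exact div_pos hcpos (pow_pos (mem_Ioi.mp hy) 2)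
    · intro hl
      have hl0 : (0 : ℝ) < l := mem_Ioi.mp hl
      refine ⟨Real.sqrt (c / l), mem_Ioi.mpr (Real.sqrt_pos.mpr (by positivity)), ?_⟩
      simp only
      have hpos : (0 : ℝ) < c / l := by positivity
      rw [Real.sq_sqrt hpos.le]
      field_simp
  have hsub := integral_image_eq_integral_abs_deriv_smul measurableSet_Ioi hderiv hinj F
  rw [himg] at hsub
  set b : ℝ := Real.sqrt k * t / 2 with hb
  have hbpos : 0 < b := by positivity
  have hpoint : ∀ y ∈ Ioi (0 : ℝ), |(-(2 * c / y ^ 3))| • F (c / y ^ 2)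
      = (2 / Real.sqrt Real.pi) * Real.exp (-y ^ 2 - b ^ 2 / y ^ 2) := by
    intro y hy
    have hy0 : (0 : ℝ) < y := mem_Ioi.mp hy
    have hπ : (0 : ℝ) < Real.sqrt Real.pi := Real.sqrt_pos.mpr Real.pi_pos
    have hcl : (0 : ℝ) < c / y ^ 2 := div_pos hcpos (by positivity)
    rw [smul_eq_mul, abs_neg, abs_of_pos (by positivity)]
    simp only [hF]
    rw [rpow_neg_three_half hcl]
    have hsq : Real.sqrt (c / y ^ 2) = t / (2 * y) := by
      rw [show c / y ^ 2 = (t / (2 * y)) ^ 2 by rw [hc]; field_simp; ring]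
      have hpos : (0 : ℝ) ≤ t / (2 * y) := by positivity
      exact Real.sqrt_sq hpos
    rw [hsq]
    have he1 : -t ^ 2 / (4 * (c / y ^ 2)) = -y ^ 2 := by
      rw [hc]; field_simp
    have hb2 : b ^ 2 = c * k := by
      rw [hb, hc, div_pow, mul_pow, Real.sq_sqrt hk.le]
      ring
    have he2 : -(c / y ^ 2) * k = -(b ^ 2 / y ^ 2) := by
      rw [hb2]
      ring
    rw [he1, he2]
    rw [show -y ^ 2 - b ^ 2 / y ^ 2 = -y ^ 2 + -(b ^ 2 / y ^ 2) by ring, Real.exp_add]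
    have ht0 : t ≠ 0 := ne_of_gt ht
    have hy0' : y ≠ 0 := ne_of_gt hy0
    rw [hc]
    field_simp
  rw [hsub, setIntegral_congr_fun measurableSet_Ioi hpoint, MeasureTheory.integral_const_mul,
    glasser b hbpos]
  have hπ : (0 : ℝ) < Real.sqrt Real.pi := Real.sqrt_pos.mpr Real.pi_pos
  rw [show (2 : ℝ) * b = Real.sqrt k * t by rw [hb]; ring]
  field_simp
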